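/- Let s be a function on a rooted tree with s(u) = 1 + Σ_{v child of u} s(v) and s(u) ≥ β·s(v) for every child v of u, where β > 1. Then for every internal node u and integer e > 1: s(u)^e ≥ β^{e-1} + β^{e-1}·Σ_{v child of u} s(v)^e. -/

import Mathlib

/-- A finite rooted tree, given by a parent function and a depth function
witnessing acyclicity. The root is its own parent. -/
structure FinRootedTree (V : Type) [Fintype V] [DecidableEq V] where
  parent : V → V
  root : V
  parent_root : parent root = root
  depth : V → ℕ
  depth_root : depth root = 0
  depth_parent : ∀ v, v ≠ root → depth (parent v) + 1 = depth v

namespace FinRootedTree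

variable {V : Type} [Fintype V] [DecidableEq V]

/-- `a` is an ancestor of `v` (every node is an ancestor of itself). -/
def IsAnc (T : FinRootedTree V) (a v : V) : Prop := ∃ k : ℕ, T.parent^[k] v = a

/-- `w` is a child of `v`. -/
def IsChild (T : FinRootedTree V) (v w : V) : Prop := T.parent w = v ∧ w ≠ T.root

/-- The number of descendants of `v` (a node is a descendant of itself). -/
noncomputable def s (T : FinRootedTree V) (v : V) : ℕ := Nat.card {w : V // T.IsAnc v w}

/-- The height of the tree: maximum number of edges on a root-to-leaf path. -/
noncomputable def height (T : FinRootedTree V) : ℕ := Finset.univ.sup T.depth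

/-- `a` is the nearest common ancestor of `x` and `y`. -/
def IsNca (T : FinRootedTree V) (x y a : V) : Prop :=
  T.IsAnc a x ∧ T.IsAnc a y ∧ ∀ b, T.IsAnc b x → T.IsAnc b y → T.IsAnc b a

/-- The edge from `v` to its child `w` is heavy: `s(w) > s(v)/2`. -/
def HeavyEdge (T : FinRootedTree V) (v w : V) : Prop :=
  T.IsChild v w ∧ 2 * T.s w > T.s v

/-- `u` and `v` lie on the same heavy path: they are connected after
deleting every edge between a light child and its parent. -/
def SameHP (T : FinRootedTree V) : V → V → Prop :=
  Relation.EqvGen (fun u v => T.HeavyEdge u v ∨ T.HeavyEdge v u)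

end FinRootedTree

/-- The set of children of `u`. -/
def FinRootedTree.children {V : Type} [Fintype V] [DecidableEq V]
    (T : FinRootedTree V) (u : V) : Finset V :=
  Finset.univ.filter (fun w => T.parent w = u ∧ w ≠ T.root)

/-- If `s(u) = 1 + Σ_{v child of u} s(v)` and `s(u) ≥ β·s(v)` for every child
`v`, with `β > 1`, then for every internal node `u` and integer `e > 1`:
`s(u)^e ≥ β^(e-1) + β^(e-1)·Σ_{v child of u} s(v)^e`. -/
theorem stmt_8 {V : Type} [Fintype V] [DecidableEq V] (T : FinRootedTree V)
    (β : ℝ) (hβ : 1 < β)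
    (hsum : ∀ u, (T.s u : ℝ) = 1 + ∑ v ∈ T.children u, (T.s v : ℝ))
    (hβs : ∀ u v, T.IsChild u v → β * (T.s v : ℝ) ≤ (T.s u : ℝ))
    (u : V) (hu : (T.children u).Nonempty) (e : ℕ) (he : 1 < e) :
    β ^ (e - 1) + β ^ (e - 1) * ∑ v ∈ T.children u, (T.s v : ℝ) ^ e ≤
      (T.s u : ℝ) ^ e := by
  obtain ⟨v0, hv0⟩ := hu
  have hchild : ∀ v ∈ T.children u, T.IsChild u v := by
    intro v hv
    simp only [FinRootedTree.children, Finset.mem_filter, Finset.mem_univ, true_and] at hv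
    exact ⟨hv.1, hv.2⟩
  have hs1 : ∀ w : V, (1:ℝ) ≤ T.s w := by
    intro w
    rw [hsum w]
    have : (0:ℝ) ≤ ∑ v ∈ T.children w, (T.s v : ℝ) :=
      Finset.sum_nonneg fun v _ => Nat.cast_nonneg _
    linarith
  have hβ0 : (0:ℝ) ≤ β := by linarith
  have hβu : β ≤ T.s u := by
    have h1 := hβs u v0 (hchild v0 hv0)
    have := hs1 v0
    nlinarith
  have hkey : ∀ v ∈ T.children u, β^(e-1) * (T.s v : ℝ)^e ≤ (T.s u:ℝ)^(e-1) * T.s v := by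
    intro v hv
    have h := hβs u v (hchild v hv)
    have hv1 := hs1 v
    have hp : (β * (T.s v:ℝ))^(e-1) ≤ (T.s u:ℝ)^(e-1) :=
      pow_le_pow_left₀ (by positivity) h _
    rw [mul_pow] at hp
    calc β^(e-1) * (T.s v:ℝ)^e = (β^(e-1) * (T.s v:ℝ)^(e-1)) * T.s v := by
          rw [mul_assoc, ← pow_succ]
          congr 2
          omega
      _ ≤ (T.s u:ℝ)^(e-1) * T.s v :=
          mul_le_mul_of_nonneg_right hp (by positivity)
  have h1 : β^(e-1) ≤ (T.s u:ℝ)^(e-1) := pow_le_pow_left₀ hβ0 hβu _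
  have hsum_le : ∑ v ∈ T.children u, β^(e-1)*(T.s v:ℝ)^e ≤
      ∑ v ∈ T.children u, (T.s u:ℝ)^(e-1) * T.s v := Finset.sum_le_sum hkey
  have heq : (T.s u:ℝ)^e = (T.s u:ℝ)^(e-1) * (1 + ∑ v ∈ T.children u, (T.s v:ℝ)) := by
    rw [← hsum u, ← pow_succ]
    congr 1
    omega
  rw [heq, mul_add, mul_one, Finset.mul_sum, Finset.mul_sum]
  rw [← Finset.mul_sum] at hsum_le
  rw [Finset.mul_sum] at hsum_le
  linarith
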